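/- No quantum strategy (even irreversible, i.e., using arbitrary quantum channels) wins the 32-Game with probability exceeding 5/6; combined with the explicit unitary strategy achieving 5/6, the optimal quantum win rate of the 32-Game is exactly 5/6. -/

import Mathlib

open Matrix

/-- Apply a quantum channel given by Kraus operators K to a state ρ. -/
noncomputable def applyKraus {n : ℕ} (K : Fin n → Matrix (Fin 2) (Fin 2) ℂ)
    (ρ : Matrix (Fin 2) (Fin 2) ℂ) : Matrix (Fin 2) (Fin 2) ℂ :=
  ∑ i, K i * ρ * (K i)ᴴ

/-- The initial state |0⟩⟨0|. -/
def rho0 : Matrix (Fin 2) (Fin 2) ℂ := !![1, 0; 0, 0]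

/-- The winning probability of the 32-Game for quantum-channel strategies of
Alice and Bob: the qubit starts in |0⟩⟨0|, Alice applies channel A_a, Bob applies
channel B_b, and the computational-basis measurement must yield δ_{ab};
inputs a,b are uniform on {0,1,2}. -/
noncomputable def winProb32 {n m : ℕ}
    (KA : Fin 3 → Fin n → Matrix (Fin 2) (Fin 2) ℂ)
    (KB : Fin 3 → Fin m → Matrix (Fin 2) (Fin 2) ℂ) : ℝ :=
  (∑ a : Fin 3, ∑ b : Fin 3,
      (if a = b then (applyKraus (KB b) (applyKraus (KA a) rho0)) 1 1
       else (applyKraus (KB b) (applyKraus (KA a) rho0)) 0 0).re) / 9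

lemma cs_complex {m : ℕ} (a b : Fin m → ℂ) :
    Complex.normSq (∑ j, a j * b j) ≤ (∑ j, Complex.normSq (a j)) * (∑ j, Complex.normSq (b j)) := by
  have h1 : ‖∑ j, a j * b j‖ ≤ ∑ j, ‖a j‖ * ‖b j‖ := by
    calc ‖∑ j, a j * b j‖ ≤ ∑ j, ‖a j * b j‖ := by
          simpa using norm_sum_le Finset.univ (fun j => a j * b j)
      _ = ∑ j, ‖a j‖ * ‖b j‖ := by simp [_root_.map_mul]
  have h2 : (∑ j, ‖a j‖ * ‖b j‖)^2
      ≤ (∑ j, ‖a j‖^2) * (∑ j, ‖b j‖^2) :=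
    Finset.sum_mul_sq_le_sq_mul_sq _ _ _
  rw [← Complex.sq_norm]
  calc (‖∑ j, a j * b j‖)^2 ≤ (∑ j, ‖a j‖ * ‖b j‖)^2 :=
        pow_le_pow_left₀ (norm_nonneg _) h1 2
    _ ≤ (∑ j, ‖a j‖^2) * (∑ j, ‖b j‖^2) := h2
    _ = _ := by simp [Complex.sq_norm]

lemma alice {n : ℕ} (K : Fin n → Matrix (Fin 2) (Fin 2) ℂ) (hK : ∑ i, (K i)ᴴ * K i = 1) :
    ∃ p x y : ℝ, (applyKraus K rho0) 0 0 = (p : ℂ) ∧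
      (applyKraus K rho0) 1 1 = ((1 - p : ℝ) : ℂ) ∧
      (applyKraus K rho0) 0 1 = Complex.mk x y ∧
      (applyKraus K rho0) 1 0 = Complex.mk x (-y) ∧
      0 ≤ p ∧ p ≤ 1 ∧ x^2 + y^2 ≤ p * (1 - p) := by
  have hent : ∀ c d, (applyKraus K rho0) c d = ∑ i, K i c 0 * (starRingEnd ℂ) (K i d 0) := by
    intro c d
    simp [applyKraus, Matrix.sum_apply, Matrix.mul_apply, rho0, Fin.sum_univ_two,
      Matrix.conjTranspose_apply, Fin.isValue]
  set p : ℝ := ∑ i, Complex.normSq (K i 0 0) with hp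
  set q : ℝ := ∑ i, Complex.normSq (K i 1 0) with hq
  set z : ℂ := ∑ i, K i 0 0 * (starRingEnd ℂ) (K i 1 0) with hz
  have hpq : p + q = 1 := by
    have h00 : (∑ i, ((K i)ᴴ * K i) 0 0) = 1 := by
      rw [← Matrix.sum_apply]; rw [hK]; simp
    have : (∑ i, ((K i)ᴴ * K i) 0 0) = ((p + q : ℝ) : ℂ) := by
      simp only [Matrix.mul_apply, Matrix.conjTranspose_apply, Fin.sum_univ_two]
      push_cast [hp, hq]
      rw [← Finset.sum_add_distrib]
      apply Finset.sum_congr rfl; intro i _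
      rw [Complex.normSq_eq_conj_mul_self, Complex.normSq_eq_conj_mul_self]
      rfl
    rw [this] at h00
    exact_mod_cast h00
  refine ⟨p, z.re, z.im, ?_, ?_, ?_, ?_, ?_, ?_, ?_⟩
  · rw [hent 0 0]
    push_cast [hp]
    apply Finset.sum_congr rfl; intro i _
    rw [Complex.normSq_eq_conj_mul_self]; ring
  · rw [hent 1 1]
    have : (1 - p : ℝ) = q := by linarith
    rw [this]
    push_cast [hq]
    apply Finset.sum_congr rfl; intro i _
    rw [Complex.normSq_eq_conj_mul_self]; ring
  · rw [hent 0 1, ← hz]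
  · rw [hent 1 0]
    have hc : Complex.mk z.re (-z.im) = (starRingEnd ℂ) z := by
      apply Complex.ext <;> simp
    rw [hc, hz, map_sum]
    apply Finset.sum_congr rfl; intro i _
    simp [mul_comm]
  · exact Finset.sum_nonneg fun i _ => Complex.normSq_nonneg _
  · have : 0 ≤ q := Finset.sum_nonneg fun i _ => Complex.normSq_nonneg _
    linarith
  · have hcs := cs_complex (fun i => K i 0 0) (fun i => (starRingEnd ℂ) (K i 1 0))
    have h1 : z.re^2 + z.im^2 = Complex.normSq z := by simp [Complex.normSq_apply]; ring
    have h2 : (1 - p : ℝ) = q := by linarith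
    rw [h1, h2]
    simpa [Complex.normSq_conj] using hcs

lemma bob {m : ℕ} (L : Fin m → Matrix (Fin 2) (Fin 2) ℂ) (hL : ∑ j, (L j)ᴴ * L j = 1) :
    ∃ e g φ ψ : ℝ, 0 ≤ e ∧ e ≤ 1 ∧ 0 ≤ g ∧ g ≤ 1 ∧
      φ^2 + ψ^2 ≤ e * g ∧ φ^2 + ψ^2 ≤ (1 - e) * (1 - g) ∧
      ∀ (σ : Matrix (Fin 2) (Fin 2) ℂ) (p x y : ℝ),
        σ 0 0 = (p:ℂ) → σ 1 1 = ((1-p:ℝ):ℂ) → σ 0 1 = Complex.mk x y → σ 1 0 = Complex.mk x (-y) →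
        ((applyKraus L σ) 1 1).re = p*e + (1-p)*g + 2*(x*φ + y*ψ) ∧
        ((applyKraus L σ) 0 0).re = 1 - (p*e + (1-p)*g + 2*(x*φ + y*ψ)) := by
  set e := ∑ j, Complex.normSq (L j 1 0) with he
  set g := ∑ j, Complex.normSq (L j 1 1) with hg
  set e' := ∑ j, Complex.normSq (L j 0 0) with he'
  set g' := ∑ j, Complex.normSq (L j 0 1) with hg'
  set F := ∑ j, (starRingEnd ℂ) (L j 1 0) * L j 1 1 with hF
  set F' := ∑ j, (starRingEnd ℂ) (L j 0 0) * L j 0 1 with hF'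
  have key : ∀ c d : Fin 2, (∑ j, ((L j)ᴴ * L j) c d) = (1 : Matrix (Fin 2) (Fin 2) ℂ) c d := by
    intro c d; rw [← Matrix.sum_apply, hL]
  have hsums : ∀ (k : Fin 2), (∑ j, (starRingEnd ℂ) (L j k 0) * L j k 0) = ((∑ j, Complex.normSq (L j k 0) : ℝ) : ℂ)
      ∧ (∑ j, (starRingEnd ℂ) (L j k 1) * L j k 1) = ((∑ j, Complex.normSq (L j k 1) : ℝ) : ℂ) := by
    intro k
    constructor <;> · push_cast
                      apply Finset.sum_congr rfl; intro j _
                      rw [Complex.normSq_eq_conj_mul_self]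
  have h00 : e' + e = 1 := by
    have := key 0 0
    simp only [Matrix.mul_apply, Matrix.conjTranspose_apply, Fin.sum_univ_two, Matrix.one_apply_eq,
      Complex.star_def, Finset.sum_add_distrib] at this
    rw [(hsums 0).1, (hsums 1).1] at this
    exact_mod_cast this
  have h11 : g' + g = 1 := by
    have := key 1 1
    simp only [Matrix.mul_apply, Matrix.conjTranspose_apply, Fin.sum_univ_two, Matrix.one_apply_eq,
      Complex.star_def, Finset.sum_add_distrib] at this
    rw [(hsums 0).2, (hsums 1).2] at this
    exact_mod_cast this
  have h01 : F' + F = 0 := by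
    have := key 0 1
    simp only [Matrix.mul_apply, Matrix.conjTranspose_apply, Fin.sum_univ_two,
      Complex.star_def, Finset.sum_add_distrib, Matrix.one_apply, if_neg] at this
    rw [← hF, ← hF'] at this
    simpa using this
  have he0 : 0 ≤ e := Finset.sum_nonneg fun _ _ => Complex.normSq_nonneg _
  have hg0 : 0 ≤ g := Finset.sum_nonneg fun _ _ => Complex.normSq_nonneg _
  have he'0 : 0 ≤ e' := Finset.sum_nonneg fun _ _ => Complex.normSq_nonneg _
  have hg'0 : 0 ≤ g' := Finset.sum_nonneg fun _ _ => Complex.normSq_nonneg _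
  have hnsq : ∀ w : ℂ, w.re^2 + w.im^2 = Complex.normSq w := by
    intro w; rw [Complex.normSq_apply]; ring
  have hcs1 : F.re^2 + F.im^2 ≤ e * g := by
    have h5 := cs_complex (fun j => (starRingEnd ℂ) (L j 1 0)) (fun j => L j 1 1)
    simp only [Complex.normSq_conj] at h5
    rw [hnsq, hF]
    exact le_trans h5 (le_of_eq (by rw [he, hg]))
  have hcs2 : F.re^2 + F.im^2 ≤ (1 - e) * (1 - g) := by
    have hFF : F = -F' := by linear_combination h01
    have h5 := cs_complex (fun j => (starRingEnd ℂ) (L j 0 0)) (fun j => L j 0 1)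
    simp only [Complex.normSq_conj] at h5
    have h2 : Complex.normSq F = Complex.normSq F' := by rw [hFF]; simp
    have h3 : (1 - e) * (1 - g) = e' * g' := by
      have h3a : (1 - e) = e' := by linarith
      have h4a : (1 - g) = g' := by linarith
      rw [h3a, h4a]
    rw [hnsq, h3, h2, hF']
    exact le_trans h5 (le_of_eq (by rw [he', hg']))
  refine ⟨e, g, F.re, F.im, he0, by linarith, hg0, by linarith, hcs1, hcs2, ?_⟩
  intro σ p x y hσ0 hσ1 hσ01 hσ10
  have hmain : ∀ (k : Fin 2) (A B : ℝ) (C : ℂ),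
      (∑ j, (starRingEnd ℂ) (L j k 0) * L j k 0) = (A:ℂ) →
      (∑ j, (starRingEnd ℂ) (L j k 1) * L j k 1) = (B:ℂ) →
      (∑ j, (starRingEnd ℂ) (L j k 0) * L j k 1) = C →
      (applyKraus L σ) k k = (p:ℂ) * A + ((1-p:ℝ):ℂ) * B
        + Complex.mk x y * (starRingEnd ℂ) C + Complex.mk x (-y) * C := by
    intro k A B C hA hB hC
    have expand : (applyKraus L σ) k k = ∑ j,
        ((p:ℂ) * ((starRingEnd ℂ) (L j k 0) * L j k 0)
        + ((1-p:ℝ):ℂ) * ((starRingEnd ℂ) (L j k 1) * L j k 1)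
        + Complex.mk x y * ((starRingEnd ℂ) ((starRingEnd ℂ) (L j k 0) * L j k 1))
        + Complex.mk x (-y) * ((starRingEnd ℂ) (L j k 0) * L j k 1)) := by
      simp only [applyKraus, Matrix.sum_apply, Matrix.mul_apply, Fin.sum_univ_two,
        Matrix.conjTranspose_apply, Complex.star_def]
      apply Finset.sum_congr rfl; intro j _
      rw [hσ0, hσ1, hσ01, hσ10]
      simp only [_root_.map_mul, Complex.conj_conj]
      ring
    rw [expand]
    simp only [Finset.sum_add_distrib, ← Finset.mul_sum]
    rw [hA, hB, hC, ← map_sum, hC]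
  have hE := hmain 1 e g F (hsums 1).1 (hsums 1).2 rfl
  have hF'eq : (∑ j, (starRingEnd ℂ) (L j 0 0) * L j 0 1) = -F := by
    rw [← hF']; linear_combination h01
  have hsum00 : (∑ j, (starRingEnd ℂ) (L j 0 0) * L j 0 0) = ((1 - e : ℝ) : ℂ) := by
    rw [(hsums 0).1, ← he']
    norm_cast; linarith
  have hsum01 : (∑ j, (starRingEnd ℂ) (L j 0 1) * L j 0 1) = ((1 - g : ℝ) : ℂ) := by
    rw [(hsums 0).2, ← hg']
    norm_cast; linarith
  have hE' := hmain 0 (1-e) (1-g) (-F) hsum00 hsum01 hF'eq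
  constructor
  · rw [hE]
    simp only [Complex.add_re, Complex.mul_re, Complex.ofReal_re, Complex.ofReal_im,
      Complex.conj_re, Complex.conj_im]
    simp; ring
  · rw [hE']
    simp only [Complex.add_re, Complex.mul_re, Complex.ofReal_re, Complex.ofReal_im,
      Complex.conj_re, Complex.conj_im, Complex.neg_re, Complex.neg_im]
    simp; ring

lemma cs3 (a1 a2 a3 b1 b2 b3 : ℝ) :
    (a1*b1+a2*b2+a3*b3)^2 ≤ (a1^2+a2^2+a3^2)*(b1^2+b2^2+b3^2) := by
  nlinarith [sq_nonneg (a1*b2-a2*b1), sq_nonneg (a1*b3-a3*b1), sq_nonneg (a2*b3-a3*b2)]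

lemma sle (s A B : ℝ) (hA : 0 ≤ A) (h : s^2 ≤ A*B) : s ≤ Real.sqrt A * Real.sqrt B := by
  calc s ≤ |s| := le_abs_self s
    _ = Real.sqrt (s^2) := (Real.sqrt_sq_eq_abs s).symm
    _ ≤ Real.sqrt (A*B) := Real.sqrt_le_sqrt h
    _ = _ := Real.sqrt_mul hA B

lemma keyB (d e g φ ψ x y : ℝ) (he0 : 0 ≤ e) (he1 : e ≤ 1) (hg0 : 0 ≤ g) (hg1 : g ≤ 1)
    (h1 : φ^2 + ψ^2 ≤ e*g) (h2 : φ^2 + ψ^2 ≤ (1-e)*(1-g)) :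
    d*e - (1+d)*g + 2*(x*φ + y*ψ) ≤ ((2*d+1)^2 + 4*(x^2+y^2))/8 := by
  have hm : (2*φ)^2 + (2*ψ)^2 + (e-g)^2 ≤ (e+g)^2 := by nlinarith
  have hm2 : (2*φ)^2 + (2*ψ)^2 + (e-g)^2 ≤ (2-(e+g))^2 := by nlinarith
  set A := (2*x)^2 + (2*y)^2 + (2*d+1)^2 with hAdef
  set B := (2*φ)^2 + (2*ψ)^2 + (e-g)^2 with hBdef
  have hA0 : 0 ≤ A := by positivity
  have hB0 : 0 ≤ B := by positivity
  set W := Real.sqrt A with hWdef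
  set μ := Real.sqrt B with hμdef
  have hW0 : 0 ≤ W := Real.sqrt_nonneg _
  have hμ0 : 0 ≤ μ := Real.sqrt_nonneg _
  have hW2 : W^2 = A := Real.sq_sqrt hA0
  have hμ2 : μ^2 = B := Real.sq_sqrt hB0
  have hμτ : μ ≤ e + g := by nlinarith
  have hμτ2 : μ ≤ 2 - (e+g) := by nlinarith
  have hμ1 : μ ≤ 1 := by linarith
  have hCS : (2*x)*(2*φ) + (2*y)*(2*ψ) + (2*d+1)*(e-g) ≤ W * μ :=
    sle _ _ _ hA0 (cs3 (2*x) (2*y) (2*d+1) (2*φ) (2*ψ) (e-g))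
  have hfin : W*μ - μ ≤ W^2/4 := by
    nlinarith [sq_nonneg (W/2 - μ), mul_nonneg hμ0 (by linarith : (0:ℝ) ≤ 1 - μ)]
  have hgoal2 : 2*(d*e - (1+d)*g + 2*(x*φ + y*ψ))
      = ((2*x)*(2*φ) + (2*y)*(2*ψ) + (2*d+1)*(e-g)) - (e+g) := by ring
  have hr : ((2*d+1)^2 + 4*(x^2+y^2))/8 = A/8 := by rw [hAdef]; ring
  rw [hr, ← hW2]
  linarith [hCS, hfin, hμτ, hgoal2]

lemma bloch (p0 p1 p2 x0 x1 x2 y0 y1 y2 : ℝ)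
    (h0 : x0^2 + y0^2 ≤ p0*(1-p0)) (h1 : x1^2 + y1^2 ≤ p1*(1-p1))
    (h2 : x2^2 + y2^2 ≤ p2*(1-p2)) :
    ((2*(p0-p1-p2)+1)^2 + 4*((x0-x1-x2)^2 + (y0-y1-y2)^2))
    + ((2*(p1-p2-p0)+1)^2 + 4*((x1-x2-x0)^2 + (y1-y2-y0)^2))
    + ((2*(p2-p0-p1)+1)^2 + 4*((x2-x0-x1)^2 + (y2-y0-y1)^2)) ≤ 12 := by
  nlinarith [sq_nonneg (2*p0+2*p1+2*p2-3), sq_nonneg (x0+x1+x2), sq_nonneg (y0+y1+y2)]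

noncomputable def c3 : ℂ := ((Real.sqrt 3 : ℝ) : ℂ)

noncomputable def myKA : Fin 3 → Fin 1 → Matrix (Fin 2) (Fin 2) ℂ :=
  ![fun _ => !![1, 0; 0, 1],
    fun _ => !![1/2, -(c3/2); c3/2, 1/2],
    fun _ => !![1/2, c3/2; -(c3/2), 1/2]]

noncomputable def myKB : Fin 3 → Fin 1 → Matrix (Fin 2) (Fin 2) ℂ :=
  ![fun _ => !![0, 1; 1, 0],
    fun _ => !![-(c3/2), 1/2; 1/2, c3/2],
    fun _ => !![c3/2, 1/2; 1/2, -(c3/2)]]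

lemma c3_mul : c3 * c3 = 3 := by
  have h : (Real.sqrt 3) * (Real.sqrt 3) = 3 := Real.mul_self_sqrt (by norm_num)
  rw [c3, ← Complex.ofReal_mul, h]; norm_num

lemma c3_sq : c3 ^ 2 = 3 := by rw [sq, c3_mul]

lemma c3_conj : (starRingEnd ℂ) c3 = c3 := by rw [c3]; exact Complex.conj_ofReal _

lemma myKA_norm : ∀ a, ∑ i, (myKA a i)ᴴ * myKA a i = 1 := by
  intro a
  fin_cases a <;>
  · simp only [myKA, Fin.sum_univ_one, Matrix.cons_val_zero, Matrix.cons_val_one, Matrix.head_cons]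
    ext i j
    fin_cases i <;> fin_cases j <;>
      simp [Matrix.mul_apply, Matrix.conjTranspose_apply, Fin.sum_univ_two, c3_conj,
          Matrix.one_apply, map_ofNat, _root_.map_one, _root_.map_zero, map_neg, map_inv₀,
          map_div₀] <;>
      first
        | linear_combination (1/4 : ℂ) * c3_sq
        | linear_combination (-1/4 : ℂ) * c3_sq
        | ring1
        | linear_combination (1/2 : ℂ) * c3_sq
        | linear_combination (-1/2 : ℂ) * c3_sq

lemma myKB_norm : ∀ b, ∑ j, (myKB b j)ᴴ * myKB b j = 1 := by
  intro b
  fin_cases b <;>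
  · simp only [myKB, Fin.sum_univ_one, Matrix.cons_val_zero, Matrix.cons_val_one, Matrix.head_cons]
    ext i j
    fin_cases i <;> fin_cases j <;>
      simp [Matrix.mul_apply, Matrix.conjTranspose_apply, Fin.sum_univ_two, c3_conj,
          Matrix.one_apply, map_ofNat, _root_.map_one, _root_.map_zero, map_neg, map_inv₀,
          map_div₀] <;>
      first
        | linear_combination (1/4 : ℂ) * c3_sq
        | linear_combination (-1/4 : ℂ) * c3_sq
        | ring1
        | linear_combination (1/2 : ℂ) * c3_sq
        | linear_combination (-1/2 : ℂ) * c3_sq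

lemma ct2 (a b c d : ℂ) : (!![a,b;c,d])ᴴ
    = !![(starRingEnd ℂ) a, (starRingEnd ℂ) c; (starRingEnd ℂ) b, (starRingEnd ℂ) d] := by
  ext i j; fin_cases i <;> fin_cases j <;> simp [Matrix.conjTranspose_apply]

lemma applyKraus_one (M ρ : Matrix (Fin 2) (Fin 2) ℂ) :
    applyKraus (fun _ : Fin 1 => M) ρ = M * ρ * Mᴴ := by
  simp [applyKraus, Fin.sum_univ_one]

lemma ev00 : (applyKraus (myKB 0) (applyKraus (myKA 0) rho0)) 1 1 = 1 := by
  have e1 : myKA 0 = fun _ : Fin 1 => myKA 0 0 := by funext i; exact congrArg _ (Subsingleton.elim i 0)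
  have e2 : myKB 0 = fun _ : Fin 1 => myKB 0 0 := by funext i; exact congrArg _ (Subsingleton.elim i 0)
  rw [e1, applyKraus_one, e2, applyKraus_one]
  simp only [myKA, myKB, rho0, Matrix.cons_val_zero, Matrix.cons_val_one, Matrix.head_cons,
    Matrix.cons_val_two, Matrix.tail_cons, ct2, Matrix.mul_fin_two, c3_conj, map_ofNat,
    _root_.map_one, _root_.map_zero, map_neg, map_inv₀, map_div₀, Matrix.cons_val', Matrix.head_fin_const,
    Matrix.empty_val', Matrix.cons_val_fin_one, Matrix.cons_val_one, Matrix.cons_val_zero, Matrix.of_apply]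
  first
  | ring1
  | linear_combination (1/4 : ℂ) * c3_sq
  | linear_combination (-1/4 : ℂ) * c3_sq
  | linear_combination (1/2 : ℂ) * c3_sq
  | linear_combination (-1/2 : ℂ) * c3_sq
  | linear_combination (c3^2/16 + 5/16) * c3_sq
  | linear_combination (-(c3^2/16) - 5/16) * c3_sq
  | linear_combination (c3^2/16 - 5/16) * c3_sq
  | linear_combination (-(c3^2/16) + 5/16) * c3_sq
  | linear_combination (c3^2/16 + 1/16) * c3_sq
  | linear_combination (-(c3^2/16) - 1/16) * c3_sq
  | linear_combination (c3^2/16 + 3/16) * c3_sq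
  | linear_combination (-(c3^2/16) - 3/16) * c3_sq

lemma ev01 : (applyKraus (myKB 1) (applyKraus (myKA 0) rho0)) 0 0 = 3/4 := by
  have e1 : myKA 0 = fun _ : Fin 1 => myKA 0 0 := by funext i; exact congrArg _ (Subsingleton.elim i 0)
  have e2 : myKB 1 = fun _ : Fin 1 => myKB 1 0 := by funext i; exact congrArg _ (Subsingleton.elim i 0)
  rw [e1, applyKraus_one, e2, applyKraus_one]
  simp only [myKA, myKB, rho0, Matrix.cons_val_zero, Matrix.cons_val_one, Matrix.head_cons,
    Matrix.cons_val_two, Matrix.tail_cons, ct2, Matrix.mul_fin_two, c3_conj, map_ofNat,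
    _root_.map_one, _root_.map_zero, map_neg, map_inv₀, map_div₀, Matrix.cons_val', Matrix.head_fin_const,
    Matrix.empty_val', Matrix.cons_val_fin_one, Matrix.cons_val_one, Matrix.cons_val_zero, Matrix.of_apply]
  first
  | ring1
  | linear_combination (1/4 : ℂ) * c3_sq
  | linear_combination (-1/4 : ℂ) * c3_sq
  | linear_combination (1/2 : ℂ) * c3_sq
  | linear_combination (-1/2 : ℂ) * c3_sq
  | linear_combination (c3^2/16 + 5/16) * c3_sq
  | linear_combination (-(c3^2/16) - 5/16) * c3_sq
  | linear_combination (c3^2/16 - 5/16) * c3_sq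
  | linear_combination (-(c3^2/16) + 5/16) * c3_sq
  | linear_combination (c3^2/16 + 1/16) * c3_sq
  | linear_combination (-(c3^2/16) - 1/16) * c3_sq
  | linear_combination (c3^2/16 + 3/16) * c3_sq
  | linear_combination (-(c3^2/16) - 3/16) * c3_sq

lemma ev02 : (applyKraus (myKB 2) (applyKraus (myKA 0) rho0)) 0 0 = 3/4 := by
  have e1 : myKA 0 = fun _ : Fin 1 => myKA 0 0 := by funext i; exact congrArg _ (Subsingleton.elim i 0)
  have e2 : myKB 2 = fun _ : Fin 1 => myKB 2 0 := by funext i; exact congrArg _ (Subsingleton.elim i 0)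
  rw [e1, applyKraus_one, e2, applyKraus_one]
  simp only [myKA, myKB, rho0, Matrix.cons_val_zero, Matrix.cons_val_one, Matrix.head_cons,
    Matrix.cons_val_two, Matrix.tail_cons, ct2, Matrix.mul_fin_two, c3_conj, map_ofNat,
    _root_.map_one, _root_.map_zero, map_neg, map_inv₀, map_div₀, Matrix.cons_val', Matrix.head_fin_const,
    Matrix.empty_val', Matrix.cons_val_fin_one, Matrix.cons_val_one, Matrix.cons_val_zero, Matrix.of_apply]
  first
  | ring1
  | linear_combination (1/4 : ℂ) * c3_sq
  | linear_combination (-1/4 : ℂ) * c3_sq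
  | linear_combination (1/2 : ℂ) * c3_sq
  | linear_combination (-1/2 : ℂ) * c3_sq
  | linear_combination (c3^2/16 + 5/16) * c3_sq
  | linear_combination (-(c3^2/16) - 5/16) * c3_sq
  | linear_combination (c3^2/16 - 5/16) * c3_sq
  | linear_combination (-(c3^2/16) + 5/16) * c3_sq
  | linear_combination (c3^2/16 + 1/16) * c3_sq
  | linear_combination (-(c3^2/16) - 1/16) * c3_sq
  | linear_combination (c3^2/16 + 3/16) * c3_sq
  | linear_combination (-(c3^2/16) - 3/16) * c3_sq

lemma ev10 : (applyKraus (myKB 0) (applyKraus (myKA 1) rho0)) 0 0 = 3/4 := by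
  have e1 : myKA 1 = fun _ : Fin 1 => myKA 1 0 := by funext i; exact congrArg _ (Subsingleton.elim i 0)
  have e2 : myKB 0 = fun _ : Fin 1 => myKB 0 0 := by funext i; exact congrArg _ (Subsingleton.elim i 0)
  rw [e1, applyKraus_one, e2, applyKraus_one]
  simp only [myKA, myKB, rho0, Matrix.cons_val_zero, Matrix.cons_val_one, Matrix.head_cons,
    Matrix.cons_val_two, Matrix.tail_cons, ct2, Matrix.mul_fin_two, c3_conj, map_ofNat,
    _root_.map_one, _root_.map_zero, map_neg, map_inv₀, map_div₀, Matrix.cons_val', Matrix.head_fin_const,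
    Matrix.empty_val', Matrix.cons_val_fin_one, Matrix.cons_val_one, Matrix.cons_val_zero, Matrix.of_apply]
  first
  | ring1
  | linear_combination (1/4 : ℂ) * c3_sq
  | linear_combination (-1/4 : ℂ) * c3_sq
  | linear_combination (1/2 : ℂ) * c3_sq
  | linear_combination (-1/2 : ℂ) * c3_sq
  | linear_combination (c3^2/16 + 5/16) * c3_sq
  | linear_combination (-(c3^2/16) - 5/16) * c3_sq
  | linear_combination (c3^2/16 - 5/16) * c3_sq
  | linear_combination (-(c3^2/16) + 5/16) * c3_sq
  | linear_combination (c3^2/16 + 1/16) * c3_sq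
  | linear_combination (-(c3^2/16) - 1/16) * c3_sq
  | linear_combination (c3^2/16 + 3/16) * c3_sq
  | linear_combination (-(c3^2/16) - 3/16) * c3_sq

lemma ev11 : (applyKraus (myKB 1) (applyKraus (myKA 1) rho0)) 1 1 = 1 := by
  have e1 : myKA 1 = fun _ : Fin 1 => myKA 1 0 := by funext i; exact congrArg _ (Subsingleton.elim i 0)
  have e2 : myKB 1 = fun _ : Fin 1 => myKB 1 0 := by funext i; exact congrArg _ (Subsingleton.elim i 0)
  rw [e1, applyKraus_one, e2, applyKraus_one]
  simp only [myKA, myKB, rho0, Matrix.cons_val_zero, Matrix.cons_val_one, Matrix.head_cons,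
    Matrix.cons_val_two, Matrix.tail_cons, ct2, Matrix.mul_fin_two, c3_conj, map_ofNat,
    _root_.map_one, _root_.map_zero, map_neg, map_inv₀, map_div₀, Matrix.cons_val', Matrix.head_fin_const,
    Matrix.empty_val', Matrix.cons_val_fin_one, Matrix.cons_val_one, Matrix.cons_val_zero, Matrix.of_apply]
  first
  | ring1
  | linear_combination (1/4 : ℂ) * c3_sq
  | linear_combination (-1/4 : ℂ) * c3_sq
  | linear_combination (1/2 : ℂ) * c3_sq
  | linear_combination (-1/2 : ℂ) * c3_sq
  | linear_combination (c3^2/16 + 5/16) * c3_sq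
  | linear_combination (-(c3^2/16) - 5/16) * c3_sq
  | linear_combination (c3^2/16 - 5/16) * c3_sq
  | linear_combination (-(c3^2/16) + 5/16) * c3_sq
  | linear_combination (c3^2/16 + 1/16) * c3_sq
  | linear_combination (-(c3^2/16) - 1/16) * c3_sq
  | linear_combination (c3^2/16 + 3/16) * c3_sq
  | linear_combination (-(c3^2/16) - 3/16) * c3_sq

lemma ev12 : (applyKraus (myKB 2) (applyKraus (myKA 1) rho0)) 0 0 = 3/4 := by
  have e1 : myKA 1 = fun _ : Fin 1 => myKA 1 0 := by funext i; exact congrArg _ (Subsingleton.elim i 0)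
  have e2 : myKB 2 = fun _ : Fin 1 => myKB 2 0 := by funext i; exact congrArg _ (Subsingleton.elim i 0)
  rw [e1, applyKraus_one, e2, applyKraus_one]
  simp only [myKA, myKB, rho0, Matrix.cons_val_zero, Matrix.cons_val_one, Matrix.head_cons,
    Matrix.cons_val_two, Matrix.tail_cons, ct2, Matrix.mul_fin_two, c3_conj, map_ofNat,
    _root_.map_one, _root_.map_zero, map_neg, map_inv₀, map_div₀, Matrix.cons_val', Matrix.head_fin_const,
    Matrix.empty_val', Matrix.cons_val_fin_one, Matrix.cons_val_one, Matrix.cons_val_zero, Matrix.of_apply]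
  first
  | ring1
  | linear_combination (1/4 : ℂ) * c3_sq
  | linear_combination (-1/4 : ℂ) * c3_sq
  | linear_combination (1/2 : ℂ) * c3_sq
  | linear_combination (-1/2 : ℂ) * c3_sq
  | linear_combination (c3^2/16 + 5/16) * c3_sq
  | linear_combination (-(c3^2/16) - 5/16) * c3_sq
  | linear_combination (c3^2/16 - 5/16) * c3_sq
  | linear_combination (-(c3^2/16) + 5/16) * c3_sq
  | linear_combination (c3^2/16 + 1/16) * c3_sq
  | linear_combination (-(c3^2/16) - 1/16) * c3_sq
  | linear_combination (c3^2/16 + 3/16) * c3_sq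
  | linear_combination (-(c3^2/16) - 3/16) * c3_sq

lemma ev20 : (applyKraus (myKB 0) (applyKraus (myKA 2) rho0)) 0 0 = 3/4 := by
  have e1 : myKA 2 = fun _ : Fin 1 => myKA 2 0 := by funext i; exact congrArg _ (Subsingleton.elim i 0)
  have e2 : myKB 0 = fun _ : Fin 1 => myKB 0 0 := by funext i; exact congrArg _ (Subsingleton.elim i 0)
  rw [e1, applyKraus_one, e2, applyKraus_one]
  simp only [myKA, myKB, rho0, Matrix.cons_val_zero, Matrix.cons_val_one, Matrix.head_cons,
    Matrix.cons_val_two, Matrix.tail_cons, ct2, Matrix.mul_fin_two, c3_conj, map_ofNat,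
    _root_.map_one, _root_.map_zero, map_neg, map_inv₀, map_div₀, Matrix.cons_val', Matrix.head_fin_const,
    Matrix.empty_val', Matrix.cons_val_fin_one, Matrix.cons_val_one, Matrix.cons_val_zero, Matrix.of_apply]
  first
  | ring1
  | linear_combination (1/4 : ℂ) * c3_sq
  | linear_combination (-1/4 : ℂ) * c3_sq
  | linear_combination (1/2 : ℂ) * c3_sq
  | linear_combination (-1/2 : ℂ) * c3_sq
  | linear_combination (c3^2/16 + 5/16) * c3_sq
  | linear_combination (-(c3^2/16) - 5/16) * c3_sq
  | linear_combination (c3^2/16 - 5/16) * c3_sq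
  | linear_combination (-(c3^2/16) + 5/16) * c3_sq
  | linear_combination (c3^2/16 + 1/16) * c3_sq
  | linear_combination (-(c3^2/16) - 1/16) * c3_sq
  | linear_combination (c3^2/16 + 3/16) * c3_sq
  | linear_combination (-(c3^2/16) - 3/16) * c3_sq

lemma ev21 : (applyKraus (myKB 1) (applyKraus (myKA 2) rho0)) 0 0 = 3/4 := by
  have e1 : myKA 2 = fun _ : Fin 1 => myKA 2 0 := by funext i; exact congrArg _ (Subsingleton.elim i 0)
  have e2 : myKB 1 = fun _ : Fin 1 => myKB 1 0 := by funext i; exact congrArg _ (Subsingleton.elim i 0)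
  rw [e1, applyKraus_one, e2, applyKraus_one]
  simp only [myKA, myKB, rho0, Matrix.cons_val_zero, Matrix.cons_val_one, Matrix.head_cons,
    Matrix.cons_val_two, Matrix.tail_cons, ct2, Matrix.mul_fin_two, c3_conj, map_ofNat,
    _root_.map_one, _root_.map_zero, map_neg, map_inv₀, map_div₀, Matrix.cons_val', Matrix.head_fin_const,
    Matrix.empty_val', Matrix.cons_val_fin_one, Matrix.cons_val_one, Matrix.cons_val_zero, Matrix.of_apply]
  first
  | ring1
  | linear_combination (1/4 : ℂ) * c3_sq
  | linear_combination (-1/4 : ℂ) * c3_sq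
  | linear_combination (1/2 : ℂ) * c3_sq
  | linear_combination (-1/2 : ℂ) * c3_sq
  | linear_combination (c3^2/16 + 5/16) * c3_sq
  | linear_combination (-(c3^2/16) - 5/16) * c3_sq
  | linear_combination (c3^2/16 - 5/16) * c3_sq
  | linear_combination (-(c3^2/16) + 5/16) * c3_sq
  | linear_combination (c3^2/16 + 1/16) * c3_sq
  | linear_combination (-(c3^2/16) - 1/16) * c3_sq
  | linear_combination (c3^2/16 + 3/16) * c3_sq
  | linear_combination (-(c3^2/16) - 3/16) * c3_sq

lemma ev22 : (applyKraus (myKB 2) (applyKraus (myKA 2) rho0)) 1 1 = 1 := by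
  have e1 : myKA 2 = fun _ : Fin 1 => myKA 2 0 := by funext i; exact congrArg _ (Subsingleton.elim i 0)
  have e2 : myKB 2 = fun _ : Fin 1 => myKB 2 0 := by funext i; exact congrArg _ (Subsingleton.elim i 0)
  rw [e1, applyKraus_one, e2, applyKraus_one]
  simp only [myKA, myKB, rho0, Matrix.cons_val_zero, Matrix.cons_val_one, Matrix.head_cons,
    Matrix.cons_val_two, Matrix.tail_cons, ct2, Matrix.mul_fin_two, c3_conj, map_ofNat,
    _root_.map_one, _root_.map_zero, map_neg, map_inv₀, map_div₀, Matrix.cons_val', Matrix.head_fin_const,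
    Matrix.empty_val', Matrix.cons_val_fin_one, Matrix.cons_val_one, Matrix.cons_val_zero, Matrix.of_apply]
  first
  | ring1
  | linear_combination (1/4 : ℂ) * c3_sq
  | linear_combination (-1/4 : ℂ) * c3_sq
  | linear_combination (1/2 : ℂ) * c3_sq
  | linear_combination (-1/2 : ℂ) * c3_sq
  | linear_combination (c3^2/16 + 5/16) * c3_sq
  | linear_combination (-(c3^2/16) - 5/16) * c3_sq
  | linear_combination (c3^2/16 - 5/16) * c3_sq
  | linear_combination (-(c3^2/16) + 5/16) * c3_sq
  | linear_combination (c3^2/16 + 1/16) * c3_sq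
  | linear_combination (-(c3^2/16) - 1/16) * c3_sq
  | linear_combination (c3^2/16 + 3/16) * c3_sq
  | linear_combination (-(c3^2/16) - 3/16) * c3_sq

lemma myValue : winProb32 myKA myKB = 5/6 := by
  unfold winProb32
  simp only [Fin.sum_univ_three]
  norm_num [ev00, ev01, ev02, ev10, ev11, ev12, ev20, ev21, ev22,
    show (0:Fin 3) ≠ 1 by decide, show (0:Fin 3) ≠ 2 by decide, show (1:Fin 3) ≠ 0 by decide,
    show (1:Fin 3) ≠ 2 by decide, show (2:Fin 3) ≠ 0 by decide, show (2:Fin 3) ≠ 1 by decide]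

lemma upper {n m : ℕ}
    (KA : Fin 3 → Fin n → Matrix (Fin 2) (Fin 2) ℂ)
    (KB : Fin 3 → Fin m → Matrix (Fin 2) (Fin 2) ℂ)
    (hKA : ∀ a, ∑ i, (KA a i)ᴴ * KA a i = 1)
    (hKB : ∀ b, ∑ j, (KB b j)ᴴ * KB b j = 1) :
    winProb32 KA KB ≤ 5/6 := by
  obtain ⟨p0, x0, y0, hA0a, hA0b, hA0c, hA0d, hp00, hp01, hq0⟩ := alice (KA 0) (hKA 0)
  obtain ⟨p1, x1, y1, hA1a, hA1b, hA1c, hA1d, hp10, hp11, hq1⟩ := alice (KA 1) (hKA 1)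
  obtain ⟨p2, x2, y2, hA2a, hA2b, hA2c, hA2d, hp20, hp21, hq2⟩ := alice (KA 2) (hKA 2)
  obtain ⟨e0, g0, φ0, ψ0, he00, he01, hg00, hg01, hc01, hc02, hB0⟩ := bob (KB 0) (hKB 0)
  obtain ⟨e1, g1, φ1, ψ1, he10, he11, hg10, hg11, hc11, hc12, hB1⟩ := bob (KB 1) (hKB 1)
  obtain ⟨e2, g2, φ2, ψ2, he20, he21, hg20, hg21, hc21, hc22, hB2⟩ := bob (KB 2) (hKB 2)
  have T00 := (hB0 _ p0 x0 y0 hA0a hA0b hA0c hA0d).1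
  have T10 := (hB0 _ p1 x1 y1 hA1a hA1b hA1c hA1d).2
  have T20 := (hB0 _ p2 x2 y2 hA2a hA2b hA2c hA2d).2
  have T01 := (hB1 _ p0 x0 y0 hA0a hA0b hA0c hA0d).2
  have T11 := (hB1 _ p1 x1 y1 hA1a hA1b hA1c hA1d).1
  have T21 := (hB1 _ p2 x2 y2 hA2a hA2b hA2c hA2d).2
  have T02 := (hB2 _ p0 x0 y0 hA0a hA0b hA0c hA0d).2
  have T12 := (hB2 _ p1 x1 y1 hA1a hA1b hA1c hA1d).2
  have T22 := (hB2 _ p2 x2 y2 hA2a hA2b hA2c hA2d).1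
  have k0 := keyB (p0-p1-p2) e0 g0 φ0 ψ0 (x0-x1-x2) (y0-y1-y2) he00 he01 hg00 hg01 hc01 hc02
  have k1 := keyB (p1-p2-p0) e1 g1 φ1 ψ1 (x1-x2-x0) (y1-y2-y0) he10 he11 hg10 hg11 hc11 hc12
  have k2 := keyB (p2-p0-p1) e2 g2 φ2 ψ2 (x2-x0-x1) (y2-y0-y1) he20 he21 hg20 hg21 hc21 hc22
  have hbl := bloch p0 p1 p2 x0 x1 x2 y0 y1 y2 hq0 hq1 hq2
  unfold winProb32
  rw [Fin.sum_univ_three]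
  simp only [Fin.sum_univ_three, reduceIte, Fin.isValue, show (0:Fin 3) ≠ 1 by decide,
    show (0:Fin 3) ≠ 2 by decide, show (1:Fin 3) ≠ 0 by decide, show (1:Fin 3) ≠ 2 by decide,
    show (2:Fin 3) ≠ 0 by decide, show (2:Fin 3) ≠ 1 by decide, if_true, if_false, ite_false]
  rw [T00, T01, T02, T10, T11, T12, T20, T21, T22]
  linarith [k0, k1, k2, hbl]

/-- The optimal quantum (even irreversible) win rate of the 32-Game is exactly
5/6: no quantum-channel strategy exceeds 5/6, and 5/6 is attained. -/
theorem stmt_12 :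
    IsGreatest
      {p : ℝ | ∃ (n m : ℕ)
          (KA : Fin 3 → Fin n → Matrix (Fin 2) (Fin 2) ℂ)
          (KB : Fin 3 → Fin m → Matrix (Fin 2) (Fin 2) ℂ),
        (∀ a, ∑ i, (KA a i)ᴴ * KA a i = 1) ∧
        (∀ b, ∑ j, (KB b j)ᴴ * KB b j = 1) ∧
        p = winProb32 KA KB}
      (5 / 6) := by
  constructor
  · exact ⟨1, 1, myKA, myKB, myKA_norm, myKB_norm, myValue.symm⟩
  · rintro p ⟨n, m, KA, KB, hKA, hKB, rfl⟩
    exact upper KA KB hKA hKB
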